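/- arXiv:2001.05018 — 12 statements merged into one kernel-verified Lean document; each statement's English description precedes it below -/
import Mathlib

section
/- Let L be a Gaussian line (a line in the complex plane containing at least two Gaussian integers), let α₀ = a+bi be the Gaussian integer on L of minimal norm (with larger real part in case of a tie), and for non-vertical L let δ = c+di = α₁ - α₀ where α₁ is the Gaussian integer on L closest to α₀ with Re(α₁) > Re(α₀) (for vertical L set δ = i). Then c and d are relatively prime rational integers, and the Gaussian integers on L are exactly the numbers α₀ + nδ for n ∈ ℤ. -/
open GaussianInt in
/-- parametrization of a Gaussian line by its base point `α₀` (of minimal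
norm, with larger real part in case of a tie) and step `δ`. -/
theorem gaussian_line_parametrization
    (L : Set ℂ) (p q : ℂ) (hq : q ≠ 0)
    (hL : L = {z : ℂ | ∃ t : ℝ, z = p + t • q})
    (β₁ β₂ : GaussianInt) (hβ : β₁ ≠ β₂)
    (hβ₁ : GaussianInt.toComplex β₁ ∈ L) (hβ₂ : GaussianInt.toComplex β₂ ∈ L)
    (α₀ δ : GaussianInt)
    (hα₀L : GaussianInt.toComplex α₀ ∈ L)
    (hmin : ∀ β : GaussianInt, GaussianInt.toComplex β ∈ L → α₀.norm ≤ β.norm)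
    (htie : ∀ β : GaussianInt, GaussianInt.toComplex β ∈ L → β.norm = α₀.norm →
      β ≠ α₀ → β.re < α₀.re)
    (hδ : ((∀ z ∈ L, z.re = (GaussianInt.toComplex α₀).re) ∧ δ = ⟨0, 1⟩) ∨
      ((¬ ∀ z ∈ L, z.re = (GaussianInt.toComplex α₀).re) ∧
        ∃ α₁ : GaussianInt, GaussianInt.toComplex α₁ ∈ L ∧ α₀.re < α₁.re ∧
          (∀ β : GaussianInt, GaussianInt.toComplex β ∈ L → α₀.re < β.re →
            (α₁ - α₀).norm ≤ (β - α₀).norm) ∧ δ = α₁ - α₀)) :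
    Int.gcd δ.re δ.im = 1 ∧
      ∀ β : GaussianInt, GaussianInt.toComplex β ∈ L ↔ ∃ n : ℤ, β = α₀ + n * δ := by
  classical
  have hCre : ∀ z : GaussianInt, (toComplex z).re = (z.re : ℝ) := fun z => by simp
  have hCim : ∀ z : GaussianInt, (toComplex z).im = (z.im : ℝ) := fun z => by simp
  have hnormInt : ∀ n : ℤ, Zsqrtd.norm (n : GaussianInt) = n * n := fun n => by
    simp [Zsqrtd.norm]
  set w : GaussianInt := β₂ - β₁ with hw
  have hwne : w ≠ 0 := sub_ne_zero.mpr (Ne.symm hβ)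
  obtain ⟨t₁, h1⟩ : ∃ t : ℝ, toComplex β₁ = p + t • q := by rw [hL] at hβ₁; exact hβ₁
  obtain ⟨t₂, h2⟩ : ∃ t : ℝ, toComplex β₂ = p + t • q := by rw [hL] at hβ₂; exact hβ₂
  obtain ⟨t₀, h0⟩ : ∃ t : ℝ, toComplex α₀ = p + t • q := by rw [hL] at hα₀L; exact hα₀L
  have ht : t₂ ≠ t₁ := by
    intro h
    apply hβ
    rw [← toComplex_inj, h1, h2, h]
  have hwq : toComplex w = ((t₂ - t₁ : ℝ) : ℂ) * q := by
    rw [hw, map_sub, h1, h2]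
    simp only [Complex.real_smul]
    push_cast
    ring
  have htC : ((t₂ : ℂ) - t₁) ≠ 0 := by exact_mod_cast sub_ne_zero.mpr ht
  have key : ∀ z : ℂ, z ∈ L ↔ ∃ s : ℝ, z = toComplex α₀ + (s : ℂ) * toComplex w := by
    intro z
    rw [hL]
    simp only [Set.mem_setOf_eq, Complex.real_smul]
    constructor
    · rintro ⟨t, rfl⟩
      refine ⟨(t - t₀) / (t₂ - t₁), ?_⟩
      rw [h0, hwq]
      simp only [Complex.real_smul]
      push_cast
      field_simp
      ring
    · rintro ⟨s, rfl⟩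
      refine ⟨t₀ + s * (t₂ - t₁), ?_⟩
      rw [h0, hwq]
      simp only [Complex.real_smul]
      push_cast
      ring
  -- primitive direction g
  set e : ℕ := Int.gcd w.re w.im with he
  have hepos : 0 < e := by
    rw [he, Int.gcd_pos_iff]
    by_contra h
    push_neg at h
    exact hwne (Zsqrtd.ext h.1 h.2)
  set g : GaussianInt := ⟨w.re / e, w.im / e⟩ with hg
  have hg1 : Int.gcd g.re g.im = 1 := Int.gcd_div_gcd_div_gcd hepos
  have hwg : w = (e : ℤ) * g := by
    have d1 : (e : ℤ) ∣ w.re := Int.gcd_dvd_left _ _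
    have d2 : (e : ℤ) ∣ w.im := Int.gcd_dvd_right _ _
    apply Zsqrtd.ext <;>
      simp [hg, Zsqrtd.re_mul, Zsqrtd.im_mul, Int.mul_ediv_cancel' d1, Int.mul_ediv_cancel' d2]
  have hreg : w.re = (e : ℤ) * g.re := by rw [hwg]; simp [Zsqrtd.re_mul]
  have hwgC : toComplex w = ((e : ℝ) : ℂ) * toComplex g := by
    rw [hwg, map_mul, map_intCast]
    push_cast
    ring
  have heR : ((e : ℝ)) ≠ 0 := by exact_mod_cast hepos.ne'
  have heC : ((e : ℝ) : ℂ) ≠ 0 := by exact_mod_cast heR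
  clear_value g
  clear hg
  -- Gaussian integers on L are α₀ + ℤ g
  have hS : ∀ β : GaussianInt, toComplex β ∈ L ↔ ∃ n : ℤ, β = α₀ + (n : GaussianInt) * g := by
    intro β
    rw [key]
    constructor
    · rintro ⟨s, hs⟩
      set r : ℝ := s * e with hr
      have hsub : toComplex (β - α₀) = ((r : ℝ) : ℂ) * toComplex g := by
        rw [map_sub, hs, hwgC, hr]
        push_cast
        ring
      have hre : ((β - α₀).re : ℝ) = r * g.re := by
        have h := congrArg Complex.re hsub
        rw [Complex.mul_re, Complex.ofReal_re, Complex.ofReal_im, hCre, hCre, hCim,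
          zero_mul, sub_zero] at h
        exact h
      have him : ((β - α₀).im : ℝ) = r * g.im := by
        have h := congrArg Complex.im hsub
        rw [Complex.mul_im, Complex.ofReal_re, Complex.ofReal_im, hCre, hCim, hCim,
          zero_mul, add_zero] at h
        exact h
      set A := Int.gcdA g.re g.im with hA
      set B := Int.gcdB g.re g.im with hB
      have hbez : (1 : ℤ) = g.re * A + g.im * B := by
        have h := Int.gcd_eq_gcd_ab g.re g.im
        rw [hg1] at h
        exact_mod_cast h
      set n : ℤ := (β - α₀).re * A + (β - α₀).im * B with hn
      have hrn : r = (n : ℝ) := by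
        have hbezR : ((g.re : ℝ) * A + (g.im : ℝ) * B) = 1 := by exact_mod_cast hbez.symm
        have : r = r * ((g.re : ℝ) * A + (g.im : ℝ) * B) := by rw [hbezR]; ring
        rw [hn]
        push_cast
        rw [this, mul_add, ← mul_assoc, ← mul_assoc, ← hre, ← him]
      have e1 : (β - α₀).re = n * g.re := by
        have : ((β - α₀).re : ℝ) = ((n * g.re : ℤ) : ℝ) := by push_cast; rw [hre, hrn]
        exact_mod_cast this
      have e2 : (β - α₀).im = n * g.im := by
        have : ((β - α₀).im : ℝ) = ((n * g.im : ℤ) : ℝ) := by push_cast; rw [him, hrn]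
        exact_mod_cast this
      refine ⟨n, ?_⟩
      have heq : β - α₀ = (n : GaussianInt) * g := by
        apply Zsqrtd.ext <;> simp [Zsqrtd.re_mul, Zsqrtd.im_mul, e1, e2]
      linear_combination heq
    · rintro ⟨n, rfl⟩
      refine ⟨n / e, ?_⟩
      rw [hwgC]
      rw [map_add, map_mul, map_intCast]
      push_cast
      have heC' : ((e : ℕ) : ℂ) ≠ 0 := Nat.cast_ne_zero.mpr hepos.ne'
      have hkey : ((n : ℂ) / (e : ℂ)) * ((e : ℂ) * toComplex g) = (n : ℂ) * toComplex g := by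
        rw [div_mul_eq_mul_div, mul_comm ((e : ℕ) : ℂ) (toComplex g), ← mul_assoc,
          mul_div_assoc, div_self heC', mul_one]
      rw [hkey]
  -- reduce goal to δ = unit * g
  suffices h : ∃ u : ℤ, u * u = 1 ∧ δ = (u : GaussianInt) * g by
    obtain ⟨u, hu, hdu⟩ := h
    have hu' : u = 1 ∨ u = -1 := Int.isUnit_iff.mp (isUnit_iff_exists_inv.mpr ⟨u, hu⟩)
    have huG : (u : GaussianInt) * u = 1 := by rw [← Int.cast_mul, hu, Int.cast_one]
    constructor
    · rcases hu' with rfl | rfl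
      · rw [hdu]
        have h1 : ((1 : ℤ) : GaussianInt) * g = g := by push_cast; ring
        rw [h1]
        exact hg1
      · rw [hdu]
        have h2 : ((-1 : ℤ) : GaussianInt) * g = -g := by push_cast; ring
        rw [h2]
        simpa [Int.gcd] using hg1
    · intro β
      rw [hS β]
      constructor
      · rintro ⟨n, rfl⟩
        refine ⟨n * u, ?_⟩
        rw [hdu]
        push_cast
        linear_combination -(n : GaussianInt) * g * huG
      · rintro ⟨m, rfl⟩
        refine ⟨m * u, ?_⟩
        rw [hdu]
        push_cast
        ring
  rcases hδ with ⟨hvert, hδeq⟩ | ⟨hnv, α₁, hα₁L, hα₁re, hα₁min, hδeq⟩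
  · -- vertical case
    have hwre : w.re = 0 := by
      have hz : toComplex α₀ + ((1 : ℝ) : ℂ) * toComplex w ∈ L := (key _).mpr ⟨1, rfl⟩
      have h := hvert _ hz
      simp only [Complex.add_re, Complex.mul_re, Complex.ofReal_re, Complex.ofReal_im,
        one_mul, zero_mul, sub_zero] at h
      have h2 : (toComplex w).re = 0 := by linarith
      rw [hCre] at h2
      exact_mod_cast h2
    have hgre : g.re = 0 := by
      have := hreg
      rw [hwre] at this
      have he0 : (e : ℤ) ≠ 0 := by exact_mod_cast hepos.ne'
      exact (mul_eq_zero.mp this.symm).resolve_left he0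
    have hgim : g.im * g.im = 1 := by
      have h := hg1
      rw [hgre] at h
      have h2 : g.im.natAbs = 1 := by simpa [Int.gcd] using h
      rcases Int.natAbs_eq_iff.mp h2 with h | h <;> rw [h] <;> ring
    refine ⟨g.im, hgim, ?_⟩
    rw [hδeq]
    apply Zsqrtd.ext <;>
      simp [Zsqrtd.re_mul, Zsqrtd.im_mul, Zsqrtd.re_intCast, Zsqrtd.im_intCast, hgre, hgim]
  · -- non-vertical case
    have hgre : g.re ≠ 0 := by
      intro h0
      apply hnv
      intro z hz
      obtain ⟨s, rfl⟩ := (key z).mp hz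
      have hwre : w.re = 0 := by rw [hreg, h0, mul_zero]
      have h1 : (toComplex w).re = 0 := by rw [hCre, hwre]; simp
      simp [Complex.add_re, Complex.mul_re, h1]
    obtain ⟨n₀, hn₀⟩ := (hS α₁).mp hα₁L
    have hδg : δ = (n₀ : GaussianInt) * g := by rw [hδeq, hn₀]; ring
    have hδre : δ.re = n₀ * g.re := by rw [hδg]; simp [Zsqrtd.re_mul]
    have hδrepos : 0 < δ.re := by
      have : δ.re = α₁.re - α₀.re := by rw [hδeq]; simp [Zsqrtd.re_sub]
      omega
    have hn₀g : 0 < n₀ * g.re := hδre ▸ hδrepos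
    set σ : ℤ := if 0 < g.re then 1 else -1 with hσ
    have hσg : 0 < σ * g.re := by
      by_cases h : 0 < g.re
      · rw [hσ, if_pos h, one_mul]; exact h
      · have h' : g.re < 0 := lt_of_le_of_ne (not_lt.mp h) hgre
        rw [hσ, if_neg h, neg_one_mul]
        omega
    have hβ'L : toComplex (α₀ + (σ : GaussianInt) * g) ∈ L := (hS _).mpr ⟨σ, rfl⟩
    have hβ're : α₀.re < (α₀ + (σ : GaussianInt) * g).re := by
      have h1 : (α₀ + (σ : GaussianInt) * g).re = α₀.re + σ * g.re := by
        simp [Zsqrtd.re_add, Zsqrtd.re_mul, Zsqrtd.re_intCast, Zsqrtd.im_intCast]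
      rw [h1]
      linarith
    have hmin' := hα₁min _ hβ'L hβ're
    have hσσ : σ * σ = 1 := by by_cases h : 0 < g.re <;> simp [hσ, h]
    have hcalc1 : (α₁ - α₀).norm = n₀ * n₀ * g.norm := by
      rw [← hδeq, hδg, Zsqrtd.norm_mul, hnormInt]
    have hcalc2 : (α₀ + (σ : GaussianInt) * g - α₀).norm = g.norm := by
      have h3 : α₀ + (σ : GaussianInt) * g - α₀ = (σ : GaussianInt) * g := by ring
      rw [h3, Zsqrtd.norm_mul, hnormInt, hσσ, one_mul]
    rw [hcalc1, hcalc2] at hmin'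
    have hgnorm : 0 < g.norm := by
      have h1 : g.norm = g.re * g.re + g.im * g.im := by rw [Zsqrtd.norm_def]; ring
      rcases hgre.lt_or_gt with h | h <;> nlinarith [mul_self_nonneg g.im]
    have hn₀ne : n₀ ≠ 0 := by rintro rfl; simp at hn₀g
    have hub : n₀ * n₀ ≤ 1 := by nlinarith
    have hlb : 1 ≤ n₀ * n₀ := by rcases hn₀ne.lt_or_gt with h | h <;> nlinarith
    have hn₀sq : n₀ * n₀ = 1 := le_antisymm hub hlb
    exact ⟨n₀, hn₀sq, hδg⟩
end

section
/- For every Gaussian integer β = x+yi ≠ 0, the smallest positive rational integer divisible by β (in ℤ[i]) equals ν(β) = N(β)/gcd(x,y), and moreover β divides a rational integer r if and only if ν(β) divides r. -/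
/-- for a nonzero `β = x + yi`, the least positive rational integer divisible
by `β` is `ν(β) = (x² + y²)/gcd(x, y)`, and `β ∣ r` for a rational integer `r` iff
`ν(β) ∣ r`. -/
theorem nu_least_rational_multiple
    (x y : ℤ) (hβ : (⟨x, y⟩ : GaussianInt) ≠ 0) :
    IsLeast {m : ℤ | 0 < m ∧ (⟨x, y⟩ : GaussianInt) ∣ (m : GaussianInt)}
        ((x ^ 2 + y ^ 2) / Int.gcd x y) ∧
      ∀ r : ℤ, (⟨x, y⟩ : GaussianInt) ∣ (r : GaussianInt) ↔
        ((x ^ 2 + y ^ 2) / Int.gcd x y : ℤ) ∣ r := by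
  set β : GaussianInt := ⟨x, y⟩ with hβdef
  have hxy : x ≠ 0 ∨ y ≠ 0 := by
    by_contra h
    push_neg at h
    exact hβ (by simp [hβdef, Zsqrtd.ext_iff, h.1, h.2])
  set g : ℤ := (Int.gcd x y : ℤ) with hg
  have hg0 : 0 < g := by
    have : 0 < Int.gcd x y := Int.gcd_pos_iff.mpr hxy
    rw [hg]
    exact_mod_cast this
  have hgx : g ∣ x := Int.gcd_dvd_left x y
  have hgy : g ∣ y := Int.gcd_dvd_right x y
  set n : ℤ := x ^ 2 + y ^ 2 with hn
  have hn0 : 0 < n := by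
    rcases hxy with h | h <;> positivity
  have hgn : g ∣ n := dvd_add (dvd_pow hgx two_ne_zero) (dvd_pow hgy two_ne_zero)
  have hnu : n / g * g = n := Int.ediv_mul_cancel hgn
  have hν0 : 0 < n / g := by nlinarith [hnu, hn0, hg0]
  have hnorm : β * star β = ((n : ℤ) : GaussianInt) := by
    rw [← Zsqrtd.norm_eq_mul_conj]
    congr 1
    simp [Zsqrtd.norm_def, hβdef, hn]
    ring
  have hmul : ∀ r : ℤ, (r : GaussianInt) * star β = ⟨r * x, -(r * y)⟩ := by
    intro r
    ext <;> simp [hβdef, Zsqrtd.re_mul, Zsqrtd.im_mul] <;> ring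
  have key : ∀ r : ℤ, β ∣ (r : GaussianInt) ↔ n / g ∣ r := by
    intro r
    constructor
    · intro h
      have h2 : β * star β ∣ (r : GaussianInt) * star β := mul_dvd_mul_right h _
      rw [hnorm, hmul] at h2
      rw [Zsqrtd.intCast_dvd] at h2
      obtain ⟨h1, h2⟩ := h2
      simp only [dvd_neg] at h2
      have h3 : n ∣ (Int.gcd (r * x) (r * y) : ℤ) := Int.dvd_coe_gcd h1 h2
      rw [Int.gcd_mul_left] at h3
      push_cast at h3
      have h4 : n ∣ |r * g| := by
        rw [abs_mul, abs_of_nonneg hg0.le]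
        exact h3
      have h5 : n ∣ r * g := (dvd_abs n _).mp h4
      rw [← hnu] at h5
      exact (mul_dvd_mul_iff_right hg0.ne').mp h5
    · intro h
      have h5 : n ∣ r * g := by
        rw [← hnu]
        exact mul_dvd_mul h dvd_rfl
      have h1 : n ∣ r * x := h5.trans (mul_dvd_mul_left r hgx)
      have h2 : n ∣ r * y := h5.trans (mul_dvd_mul_left r hgy)
      have h6 : ((n : ℤ) : GaussianInt) ∣ (⟨r * x, -(r * y)⟩ : GaussianInt) := by
        rw [Zsqrtd.intCast_dvd]
        exact ⟨h1, (dvd_neg).mpr h2⟩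
      rw [← hmul, ← hnorm] at h6
      exact (mul_dvd_mul_iff_right ((star_ne_zero).mpr hβ)).mp h6
  refine ⟨⟨⟨hν0, (key _).mpr dvd_rfl⟩, ?_⟩, key⟩
  rintro m ⟨hm0, hmd⟩
  exact Int.le_of_dvd hm0 ((key m).mp hmd)
end

section
/- Let L be a primitive Gaussian line with Gaussian integers α_n = α₀ + nδ (α₀, δ relatively prime in ℤ[i]). Suppose β ∈ ℤ[i] divides α_t for some t ∈ ℤ. Then for every n ∈ ℤ, β divides α_n if and only if n ≡ t (mod ν(β)), where ν(x+yi) = (x²+y²)/gcd(x,y). -/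
/-- `ν(x + yi) = (x² + y²)/gcd(x, y)`. -/
def nu (β : GaussianInt) : ℤ := (β.re ^ 2 + β.im ^ 2) / Int.gcd β.re β.im

lemma nu_dvd_int_iff (β : GaussianInt) (m : ℤ) :
    β ∣ (m : GaussianInt) ↔ nu β ∣ m := by
  rcases eq_or_ne β 0 with rfl | hβ
  · simp [nu, zero_dvd_iff]
  · set x := β.re with hx
    set y := β.im with hy
    set g : ℤ := (Int.gcd x y : ℤ) with hgdef
    have hg0 : g ≠ 0 := by
      simp only [hgdef, ne_eq, Int.natCast_eq_zero, Int.gcd_eq_zero_iff, not_and]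
      intro h1 h2
      exact hβ (by ext <;> simp_all)
    have hgx : g ∣ x := Int.gcd_dvd_left x y
    have hgy : g ∣ y := Int.gcd_dvd_right x y
    set N : ℤ := x ^ 2 + y ^ 2 with hNdef
    have hgN : g ∣ N := dvd_add (by simpa [pow_two] using hgx.mul_left x)
      (by simpa [pow_two] using hgy.mul_left y)
    have hNg : nu β * g = N := Int.ediv_mul_cancel hgN
    have hnorm : (N : GaussianInt) = β * star β := by
      have := Zsqrtd.norm_eq_mul_conj β
      rw [← this]
      congr 1
      simp [Zsqrtd.norm, hNdef, ← hx, ← hy]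
      ring
    have hstar : star β ≠ 0 := by
      intro h; apply hβ; simpa using congrArg star h
    have step1 : β ∣ (m : GaussianInt) ↔ (N : GaussianInt) ∣ (m : GaussianInt) * star β := by
      constructor
      · rintro ⟨q, hq⟩
        exact ⟨q, by rw [hq, hnorm]; ring⟩
      · rintro ⟨q, hq⟩
        refine ⟨q, mul_right_cancel₀ hstar ?_⟩
        rw [hq, hnorm]; ring
    have hre : ((m : GaussianInt) * star β).re = m * x := by
      simp [Zsqrtd.re_mul, ← hx, ← hy]
    have him : ((m : GaussianInt) * star β).im = -(m * y) := by
      simp [Zsqrtd.im_mul, ← hx, ← hy]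
    have step2 : (N : GaussianInt) ∣ (m : GaussianInt) * star β ↔ N ∣ m * x ∧ N ∣ m * y := by
      rw [Zsqrtd.intCast_dvd, hre, him, dvd_neg]
    have step3 : (N ∣ m * x ∧ N ∣ m * y) ↔ N ∣ m * g := by
      constructor
      · rintro ⟨h1, h2⟩
        have hb := Int.gcd_eq_gcd_ab x y
        have : m * g = (m * x) * Int.gcdA x y + (m * y) * Int.gcdB x y := by
          rw [hgdef, hb]; ring
        rw [this]
        exact dvd_add (h1.mul_right _) (h2.mul_right _)
      · intro h
        exact ⟨h.trans (mul_dvd_mul_left m hgx), h.trans (mul_dvd_mul_left m hgy)⟩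
    have step4 : N ∣ m * g ↔ nu β ∣ m := by
      rw [← hNg, mul_dvd_mul_iff_right hg0]
    rw [step1, step2, step3, step4]

/-- periodicity of divisibility on a primitive Gaussian line: if `β ∣ α_t`
then `β ∣ α_n` iff `n ≡ t (mod ν(β))`. -/
theorem gaussian_line_divisibility_periodic
    (α₀ δ : GaussianInt) (hcd : Int.gcd δ.re δ.im = 1) (hcop : IsCoprime α₀ δ)
    (β : GaussianInt) (t : ℤ) (ht : β ∣ (α₀ + (t : GaussianInt) * δ)) :
    ∀ n : ℤ, β ∣ (α₀ + (n : GaussianInt) * δ) ↔ n ≡ t [ZMOD nu β] := by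
  intro n
  have hαt : IsCoprime (α₀ + (t : GaussianInt) * δ) δ := hcop.add_mul_right_left _
  have hβδ : IsCoprime β δ := IsCoprime.of_isCoprime_of_dvd_left hαt ht
  have hdiff : (α₀ + (n : GaussianInt) * δ) - (α₀ + (t : GaussianInt) * δ)
      = ((n - t : ℤ) : GaussianInt) * δ := by push_cast; ring
  have key : β ∣ (α₀ + (n : GaussianInt) * δ) ↔ β ∣ ((n - t : ℤ) : GaussianInt) * δ := by
    constructor
    · intro h
      rw [← hdiff]; exact dvd_sub h ht
    · intro h
      have : α₀ + (n : GaussianInt) * δ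
          = (α₀ + (t : GaussianInt) * δ) + ((n - t : ℤ) : GaussianInt) * δ := by
        push_cast; ring
      rw [this]; exact dvd_add ht h
  rw [key]
  constructor
  · intro h
    have h2 : β ∣ ((n - t : ℤ) : GaussianInt) := hβδ.dvd_of_dvd_mul_right h
    have := (nu_dvd_int_iff β (n - t)).mp h2
    exact (Int.modEq_iff_dvd.mpr this).symm
  · intro h
    have : nu β ∣ n - t := neg_sub t n ▸ (Int.ModEq.dvd h).neg_right
    exact ((nu_dvd_int_iff β (n - t)).mpr this).mul_right δ
end

section
/- Let L be a primitive Gaussian line with α_n = α₀ + nδ. If β ∈ ℤ[i] divides some α_s and γ ∈ ℤ[i] divides some α_t, and if ν(β) and ν(γ) are relatively prime rational integers, then βγ divides some α_n. -/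
/-- Every Gaussian integer divides (the cast of) its `nu`. -/
lemma dvd_nu (β : GaussianInt) : β ∣ ((nu β : ℤ) : GaussianInt) := by
  set g : ℤ := (Int.gcd β.re β.im : ℤ) with hgdef
  obtain ⟨r, hr⟩ : g ∣ β.re := Int.gcd_dvd_left _ _
  obtain ⟨m, hm⟩ : g ∣ β.im := Int.gcd_dvd_right _ _
  by_cases hg : g = 0
  · have h1 : β.re = 0 := by rw [hr, hg, zero_mul]
    have h2 : β.im = 0 := by rw [hm, hg, zero_mul]
    have h0 : nu β = 0 := by simp [nu, h1, h2]
    rw [h0]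
    simp
  · refine ⟨⟨r, -m⟩, ?_⟩
    have hnu : nu β = g * (r ^ 2 + m ^ 2) := by
      have hsum : β.re ^ 2 + β.im ^ 2 = g * (g * (r ^ 2 + m ^ 2)) := by
        rw [hr, hm]; ring
      unfold nu
      rw [← hgdef, hsum, Int.mul_ediv_cancel_left _ hg]
    ext
    · simp only [Zsqrtd.re_intCast, Zsqrtd.re_mul]
      rw [hnu, hr, hm]; ring
    · simp only [Zsqrtd.im_intCast, Zsqrtd.im_mul]
      rw [hr, hm]; ring

/-- if `β` and `γ` each divide some Gaussian integer on a primitive Gaussian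
line and `ν(β)`, `ν(γ)` are relatively prime, then `βγ` divides some Gaussian integer on
the line. -/
theorem gaussian_line_divisor_mul
    (α₀ δ : GaussianInt) (hcd : Int.gcd δ.re δ.im = 1) (hcop : IsCoprime α₀ δ)
    (β γ : GaussianInt) (s t : ℤ)
    (hβ : β ∣ (α₀ + (s : GaussianInt) * δ)) (hγ : γ ∣ (α₀ + (t : GaussianInt) * δ))
    (hν : IsCoprime (nu β) (nu γ)) :
    ∃ n : ℤ, β * γ ∣ (α₀ + (n : GaussianInt) * δ) := by
  obtain ⟨a, b, hab⟩ := hν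
  set n : ℤ := s * (b * nu γ) + t * (a * nu β) with hn
  have hβν : β ∣ ((nu β : ℤ) : GaussianInt) := dvd_nu β
  have hγν : γ ∣ ((nu γ : ℤ) : GaussianInt) := dvd_nu γ
  have h1 : IsCoprime ((nu β : GaussianInt)) ((nu γ : GaussianInt)) :=
    IsCoprime.map ⟨a, b, hab⟩ (Int.castRingHom GaussianInt)
  have hcopβγ : IsCoprime β γ :=
    IsCoprime.of_isCoprime_of_dvd_right (IsCoprime.of_isCoprime_of_dvd_left h1 hβν) hγν
  refine ⟨n, ?_⟩
  have hβn : β ∣ (α₀ + (n : GaussianInt) * δ) := by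
    have hns : n - s = nu β * (a * (t - s)) := by
      rw [hn]; linear_combination s * hab
    have hd : β ∣ ((n - s : ℤ) : GaussianInt) := by
      rw [hns]
      push_cast
      exact (hβν.mul_right _)
    have heq : α₀ + (n : GaussianInt) * δ
        = (α₀ + (s : GaussianInt) * δ) + ((n - s : ℤ) : GaussianInt) * δ := by
      push_cast; ring
    rw [heq]
    exact dvd_add hβ (hd.mul_right δ)
  have hγn : γ ∣ (α₀ + (n : GaussianInt) * δ) := by
    have hnt : n - t = nu γ * (b * (s - t)) := by
      rw [hn]; linear_combination t * hab
    have hd : γ ∣ ((n - t : ℤ) : GaussianInt) := by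
      rw [hnt]
      push_cast
      exact (hγν.mul_right _)
    have heq : α₀ + (n : GaussianInt) * δ
        = (α₀ + (t : GaussianInt) * δ) + ((n - t : ℤ) : GaussianInt) * δ := by
      push_cast; ring
    rw [heq]
    exact dvd_add hγ (hd.mul_right δ)
  exact hcopβγ.mul_dvd hβn hγn
end

section
/- Let L be a primitive Gaussian line with α₀ = a+bi, δ = c+di, and Δ = ad - bc. A rational integer r divides some Gaussian integer α_n = α₀ + nδ on L (as an element of ℤ[i]) if and only if r divides Δ. -/
/-- a rational integer `r` divides some Gaussian integer on a primitive
Gaussian line iff `r` divides `Δ = ad - bc`. -/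
theorem gaussian_line_rational_divisor_iff
    (a b c d : ℤ) (hcd : Int.gcd c d = 1)
    (hcop : IsCoprime (⟨a, b⟩ : GaussianInt) (⟨c, d⟩ : GaussianInt)) (r : ℤ) :
    (∃ n : ℤ, (r : GaussianInt) ∣ ((⟨a, b⟩ : GaussianInt) + (n : GaussianInt) * ⟨c, d⟩)) ↔
      r ∣ (a * d - b * c) := by
  have key : ∀ n : ℤ, (r : GaussianInt) ∣ ((⟨a, b⟩ : GaussianInt) + (n : GaussianInt) * ⟨c, d⟩)
      ↔ r ∣ (a + n * c) ∧ r ∣ (b + n * d) := by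
    intro n
    rw [Zsqrtd.intCast_dvd]
    simp [Zsqrtd.add_def, Zsqrtd.re_mul, Zsqrtd.im_mul]
  constructor
  · rintro ⟨n, hn⟩
    rw [key] at hn
    obtain ⟨h1, h2⟩ := hn
    have : a * d - b * c = d * (a + n * c) - c * (b + n * d) := by ring
    rw [this]
    exact dvd_sub (Dvd.dvd.mul_left h1 d) (Dvd.dvd.mul_left h2 c)
  · intro hr
    have hbez : c * Int.gcdA c d + d * Int.gcdB c d = 1 := by
      have := Int.gcd_eq_gcd_ab c d
      rw [hcd] at this
      push_cast at this
      linarith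
    set u := Int.gcdA c d
    set v := Int.gcdB c d
    refine ⟨-(u * a + v * b), ?_⟩
    rw [key]
    constructor
    · have : a + -(u * a + v * b) * c = v * (a * d - b * c) - a * (c * u + d * v - 1) := by
        ring
      rw [this, hbez]
      simpa using Dvd.dvd.mul_left hr v
    · have : b + -(u * a + v * b) * d = -u * (a * d - b * c) - b * (c * u + d * v - 1) := by
        ring
      rw [this, hbez]
      simpa using Dvd.dvd.mul_left hr (-u)
end

section
/- Let L be a primitive Gaussian line with α_n = α₀ + nδ, and let π be a Gaussian prime that is not a rational integer (i.e., not an associate of a rational prime). Then π divides some α_n if and only if π does not divide δ. -/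
open Zsqrtd

/-- Any Gaussian integer is congruent to a rational integer modulo a prime `π`
that satisfies: `π` divides `⟨0,1⟩ - e` for some integer `e`. -/
lemma exists_int_congr (π ζ : GaussianInt) (e : ℤ)
    (he : π ∣ (⟨0, 1⟩ : GaussianInt) - (e : GaussianInt)) :
    ∃ m : ℤ, π ∣ ζ - (m : GaussianInt) := by
  refine ⟨ζ.re + e * ζ.im, ?_⟩
  have key : ζ - ((ζ.re + e * ζ.im : ℤ) : GaussianInt)
      = (ζ.im : GaussianInt) * ((⟨0, 1⟩ : GaussianInt) - (e : GaussianInt)) := by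
    ext <;> simp [Zsqrtd.re_mul, Zsqrtd.im_mul] <;> ring
  rw [key]
  exact Dvd.dvd.mul_left he _

/-- For a non-rational Gaussian prime `π`, the imaginary unit is congruent to
a rational integer modulo `π`. -/
lemma exists_int_congr_i (π : GaussianInt) (hπ : Prime π)
    (hnotrat : ¬ ∃ m : ℤ, Associated π (m : GaussianInt)) :
    ∃ e : ℤ, π ∣ (⟨0, 1⟩ : GaussianInt) - (e : GaussianInt) := by
  set a : ℤ := π.re with ha
  set b : ℤ := π.im with hb
  -- first: gcd a b = 1
  have hgcd : Int.gcd a b = 1 := by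
    by_contra hg
    set g : ℤ := (Int.gcd a b : ℤ) with hgdef
    obtain ⟨a', ha'⟩ := Int.gcd_dvd_left (a := a) (b := b)
    obtain ⟨b', hb'⟩ := Int.gcd_dvd_right (a := a) (b := b)
    have hfac : π = (g : GaussianInt) * ⟨a', b'⟩ := by
      ext <;> simp [← ha', ← hb'] <;> [exact ha'; exact hb']
    rcases hπ.irreducible.isUnit_or_isUnit hfac with hu | hu
    · -- g is a unit in ℤ[i], so g ∣ 1 hence gcd = 1
      have : (g : GaussianInt) ∣ 1 := hu.dvd
      rw [show (1 : GaussianInt) = ((1 : ℤ) : GaussianInt) by norm_num] at this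
      have hg1 : g ∣ (1 : ℤ) := (Zsqrtd.intCast_dvd_intCast _ _).mp this
      have := Int.eq_one_of_dvd_one (by positivity) hg1
      omega
    · exact hnotrat ⟨g, hfac ▸ associated_mul_unit_left _ _ hu⟩
  -- b is coprime to the norm p = a*a + b*b
  have hab : IsCoprime b a := by
    rw [Int.isCoprime_iff_gcd_eq_one, Int.gcd_comm]; exact hgcd
  have hbp : IsCoprime b (a * a + b * b) :=
    (hab.mul_right hab).add_mul_left_right b
  obtain ⟨c, v, hcv⟩ := hbp
  refine ⟨-(c * a), ?_⟩
  have hnorm : ((a * a + b * b : ℤ) : GaussianInt) = π * star π := by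
    have := Zsqrtd.norm_eq_mul_conj π
    rw [Zsqrtd.norm] at this
    convert this using 2
    ring
  have key : (⟨0, 1⟩ : GaussianInt) - ((-(c * a) : ℤ) : GaussianInt)
      = (c : GaussianInt) * π + (v : GaussianInt) * ((a * a + b * b : ℤ) : GaussianInt)
        * ⟨0, 1⟩ := by
    have hh : c * b + v * (a * a + b * b) = 1 := hcv
    ext <;> simp [Zsqrtd.re_mul, Zsqrtd.im_mul, ← ha, ← hb] <;> nlinarith [hh]
  rw [key, hnorm]
  exact dvd_add ((dvd_refl π).mul_left _)
    (((dvd_mul_right π (star π)).mul_left _).mul_right _)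

/-- a non-rational Gaussian prime `π` divides some Gaussian integer on a
primitive Gaussian line iff `π` does not divide `δ`. -/
theorem gaussian_line_prime_divisor_iff
    (α₀ δ : GaussianInt) (hcd : Int.gcd δ.re δ.im = 1) (hcop : IsCoprime α₀ δ)
    (π : GaussianInt) (hπ : Prime π) (hnotrat : ¬ ∃ m : ℤ, Associated π (m : GaussianInt)) :
    (∃ n : ℤ, π ∣ (α₀ + (n : GaussianInt) * δ)) ↔ ¬ π ∣ δ := by
  constructor
  · rintro ⟨n, hn⟩ hd
    have hα : π ∣ α₀ := by
      have : π ∣ (n : GaussianInt) * δ := hd.mul_left _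
      have := dvd_sub hn this
      simpa using this
    obtain ⟨u, v, huv⟩ := hcop
    have : π ∣ 1 := by
      rw [← huv]
      exact dvd_add (hα.mul_left u) (hd.mul_left v)
    exact hπ.not_unit (isUnit_of_dvd_one this)
  · intro hd
    obtain ⟨e, he⟩ := exists_int_congr_i π hπ hnotrat
    obtain ⟨mα, hmα⟩ := exists_int_congr π α₀ e he
    obtain ⟨mδ, hmδ⟩ := exists_int_congr π δ e he
    have hdm : ¬ π ∣ (mδ : GaussianInt) := by
      intro h
      apply hd
      have := dvd_add hmδ h
      simpa using this
    have hco : IsCoprime π (mδ : GaussianInt) := hπ.coprime_iff_not_dvd.mpr hdm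
    obtain ⟨u, v, huv⟩ := hco
    obtain ⟨mv, hmv⟩ := exists_int_congr π v e he
    refine ⟨-mα * mv, ?_⟩
    -- work modulo π via divisibility chasing
    -- α₀ + nδ ≡ mα + n mδ ≡ mα - mα*v*mδ = mα*(1 - v*mδ) = mα*u*π ≡ 0
    have h1 : π ∣ α₀ + ((-mα * mv : ℤ) : GaussianInt) * δ
        - ((mα : GaussianInt) + ((-mα * mv : ℤ) : GaussianInt) * (mδ : GaussianInt)) := by
      have := dvd_add hmα (hmδ.mul_left ((-mα * mv : ℤ) : GaussianInt))
      convert this using 1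
      ring
    have h2 : π ∣ ((mα : GaussianInt) + ((-mα * mv : ℤ) : GaussianInt) * (mδ : GaussianInt))
        - (mα : GaussianInt) * (1 - v * (mδ : GaussianInt)) := by
      have := hmv.mul_left ((mα : GaussianInt) * (mδ : GaussianInt))
      convert this using 1
      push_cast
      ring
    have h3 : π ∣ (mα : GaussianInt) * (1 - v * (mδ : GaussianInt)) := by
      have : (1 : GaussianInt) - v * (mδ : GaussianInt) = u * π := by
        rw [← huv]; ring
      rw [this]
      exact Dvd.dvd.mul_left (dvd_mul_left π u) _
    have := dvd_add (dvd_add h1 h2) h3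
    convert this using 1
    ring
end

section
/- Let L be a primitive Gaussian line with α_n = α₀ + nδ. Suppose μ₁, …, μ_k are Gaussian integers each dividing some Gaussian integer on L, such that ν(μ₁), …, ν(μ_k) are pairwise relatively prime rational integers, and let b₁, …, b_k be arbitrary rational integers. Then there exists a rational integer t, unique modulo ν(μ₁)ν(μ₂)⋯ν(μ_k), such that μ_j divides α_{t+b_j} for all 1 ≤ j ≤ k. -/
open Finset

lemma int_key {x y : ℤ} (h : x ≠ 0 ∨ y ≠ 0) (m : ℤ) :
    (x ^ 2 + y ^ 2) / Int.gcd x y ∣ m ↔ (x ^ 2 + y ^ 2 ∣ x * m ∧ x ^ 2 + y ^ 2 ∣ y * m) := by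
  have hgpos : 0 < Int.gcd x y := Int.gcd_pos_iff.2 h
  set g : ℤ := (Int.gcd x y : ℤ) with hgdef
  have hg : g ≠ 0 := Int.natCast_ne_zero.mpr hgpos.ne'
  have hx : g * (x / g) = x := Int.mul_ediv_cancel' (Int.gcd_dvd_left x y)
  have hy : g * (y / g) = y := Int.mul_ediv_cancel' (Int.gcd_dvd_right x y)
  set x' := x / g with hx'
  set y' := y / g with hy'
  have hcop : Int.gcd x' y' = 1 := Int.gcd_div_gcd_div_gcd hgpos
  have hN : x ^ 2 + y ^ 2 = g * (g * (x' ^ 2 + y' ^ 2)) := by rw [← hx, ← hy]; ring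
  have hnu : (x ^ 2 + y ^ 2) / g = g * (x' ^ 2 + y' ^ 2) := by
    rw [hN, Int.mul_ediv_cancel_left _ hg]
  have hxm : x * m = g * (x' * m) := by rw [← hx]; ring
  have hym : y * m = g * (y' * m) := by rw [← hy]; ring
  rw [hnu, hN, hxm, hym, mul_dvd_mul_iff_left hg, mul_dvd_mul_iff_left hg]
  constructor
  · intro hd
    exact ⟨hd.mul_left x', hd.mul_left y'⟩
  · rintro ⟨h1, h2⟩
    have hgl : g * (x' ^ 2 + y' ^ 2) ∣ (Int.gcd (m * x') (m * y') : ℤ) :=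
      Int.dvd_coe_gcd (by rw [mul_comm m x']; exact h1) (by rw [mul_comm m y']; exact h2)
    rw [Int.gcd_mul_left, hcop, mul_one] at hgl
    exact Int.dvd_natAbs.mp hgl

lemma nu_dvd_int (μ : GaussianInt) (m : ℤ) : nu μ ∣ m ↔ μ ∣ (m : GaussianInt) := by
  rcases eq_or_ne μ 0 with rfl | hμ
  · simp only [nu, Zsqrtd.re_zero, Zsqrtd.im_zero, zero_dvd_iff]
    norm_num
  · have hre : μ.re ≠ 0 ∨ μ.im ≠ 0 := by
      by_contra hc
      push_neg at hc
      exact hμ (Zsqrtd.ext_iff.2 ⟨hc.1, hc.2⟩)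
    have hstar : star μ ≠ 0 := star_ne_zero.mpr hμ
    have h1 : μ ∣ (m : GaussianInt) ↔ star μ * μ ∣ star μ * (m : GaussianInt) :=
      (mul_dvd_mul_iff_left hstar).symm
    have h2 : star μ * μ = ((μ.re ^ 2 + μ.im ^ 2 : ℤ) : GaussianInt) := by
      have := Zsqrtd.norm_eq_mul_conj μ
      rw [mul_comm] at this
      rw [← this, Zsqrtd.norm_def]
      push_cast
      ring
    have h3 : (star μ * (m : GaussianInt)).re = μ.re * m := by
      simp [Zsqrtd.re_mul]
    have h4 : (star μ * (m : GaussianInt)).im = -(μ.im * m) := by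
      simp [Zsqrtd.im_mul]
    rw [h1, h2, Zsqrtd.intCast_dvd, h3, h4, dvd_neg, nu, int_key hre]

lemma crt2 {m n : ℤ} (h : IsCoprime m n) (a c : ℤ) : ∃ s, m ∣ s - a ∧ n ∣ s - c := by
  obtain ⟨u, v, huv⟩ := h
  exact ⟨c * (u * m) + a * (v * n), ⟨(c - a) * u, by linear_combination a * huv⟩,
    ⟨(a - c) * v, by linear_combination c * huv⟩⟩

lemma crt (k : ℕ) (ν r : Fin k → ℤ) (h : ∀ i j, i ≠ j → IsCoprime (ν i) (ν j)) :
    ∃ t, ∀ j, ν j ∣ t - r j := by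
  induction k with
  | zero => exact ⟨0, fun j => j.elim0⟩
  | succ k ih =>
    obtain ⟨t, ht⟩ := ih (fun i => ν i.succ) (fun i => r i.succ)
      (fun i j hij => h _ _ (fun hc => hij (Fin.succ_injective _ hc)))
    have hc : IsCoprime (ν 0) (∏ j : Fin k, ν j.succ) :=
      IsCoprime.prod_right fun j _ => h 0 j.succ (Fin.succ_ne_zero j).symm
    obtain ⟨s, hs0, hsp⟩ := crt2 hc (r 0) t
    refine ⟨s, fun j => ?_⟩
    refine Fin.cases hs0 (fun i => ?_) j
    have h1 : ν i.succ ∣ s - t := (Finset.dvd_prod_of_mem _ (mem_univ i)).trans hsp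
    have h2 : ν i.succ ∣ t - r i.succ := ht i
    simpa using dvd_add h1 h2

/-- CRT for Gaussian lines. -/
theorem gaussian_line_crt
    (α₀ δ : GaussianInt) (hcd : Int.gcd δ.re δ.im = 1) (hcop : IsCoprime α₀ δ)
    (k : ℕ) (μ : Fin k → GaussianInt) (b : Fin k → ℤ)
    (hdvd : ∀ j, ∃ n : ℤ, μ j ∣ (α₀ + (n : GaussianInt) * δ))
    (hν : ∀ i j, i ≠ j → IsCoprime (nu (μ i)) (nu (μ j))) :
    ∃ t : ℤ, (∀ j, μ j ∣ (α₀ + ((t + b j : ℤ) : GaussianInt) * δ)) ∧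
      ∀ t' : ℤ, (∀ j, μ j ∣ (α₀ + ((t' + b j : ℤ) : GaussianInt) * δ)) →
        t' ≡ t [ZMOD ∏ j, nu (μ j)] := by
  choose n hn using hdvd
  have key : ∀ j (m : ℤ), μ j ∣ (α₀ + (m : GaussianInt) * δ) ↔ nu (μ j) ∣ (m - n j) := by
    intro j m
    have hμδ : IsCoprime (μ j) δ :=
      IsCoprime.of_isCoprime_of_dvd_left (hcop.add_mul_right_left (n j : GaussianInt)) (hn j)
    have heq : α₀ + (m : GaussianInt) * δ =
        (α₀ + (n j : GaussianInt) * δ) + ((m - n j : ℤ) : GaussianInt) * δ := by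
      push_cast; ring
    rw [heq, dvd_add_right (hn j)]
    constructor
    · intro hd
      exact (nu_dvd_int _ _).2 (hμδ.dvd_of_dvd_mul_right hd)
    · intro hd
      exact ((nu_dvd_int _ _).1 hd).mul_right δ
  obtain ⟨t, ht⟩ := crt k (fun j => nu (μ j)) (fun j => n j - b j) hν
  refine ⟨t, fun j => ?_, ?_⟩
  · rw [key j]
    have h := ht j
    have e : t - (n j - b j) = t + b j - n j := by ring
    exact e ▸ h
  intro t' ht'
  have hdt : ∀ j, nu (μ j) ∣ t' - t := by
    intro j
    have h1 := (key j _).1 (ht' j)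
    have h2 : nu (μ j) ∣ t - (n j - b j) := ht j
    have := dvd_sub h1 h2
    have heq : t' + b j - n j - (t - (n j - b j)) = t' - t := by ring
    rwa [heq] at this
  have hP : (∏ j, nu (μ j)) ∣ t' - t :=
    Finset.prod_dvd_of_coprime (fun i _ j _ hij => hν i j hij) (fun j _ => hdt j)
  exact Int.ModEq.symm (Int.modEq_iff_dvd.2 hP)
end

section
/- Let L be a primitive Gaussian line with Δ = ad - bc ≠ 0, and let π be a Gaussian prime lying over a rational prime p ≡ 1 (mod 4). If π^k divides some Gaussian integer α_m on L for some k ≥ 1, then for every positive integer r there exists n ∈ ℤ such that π^r exactly divides α_n (i.e., π^r ∣ α_n but π^{r+1} ∤ α_n). -/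
lemma auxA (p : ℕ) (hp : p.Prime) (hp1 : p % 4 = 1) :
    ∀ s : ℕ, ∃ u : ℤ, (p : ℤ) ^ (s + 1) ∣ u ^ 2 + 1 := by
  haveI : Fact p.Prime := ⟨hp⟩
  have hpZ : Prime (p : ℤ) := Nat.prime_iff_prime_int.mp hp
  intro s
  induction s with
  | zero =>
    obtain ⟨y, hy⟩ : IsSquare (-1 : ZMod p) := by
      rw [ZMod.exists_sq_eq_neg_one_iff]; omega
    refine ⟨(y.val : ℤ), ?_⟩
    rw [pow_one, ← ZMod.intCast_zmod_eq_zero_iff_dvd]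
    push_cast
    rw [ZMod.natCast_val, ZMod.cast_id, sq, ← hy]
    ring
  | succ s ih =>
    obtain ⟨u, v, hv⟩ := ih
    have h1 : (p : ℤ) ∣ u ^ 2 + 1 :=
      (dvd_pow_self _ (Nat.succ_ne_zero s)).trans ⟨v, hv⟩
    have hpu : ¬ (p : ℤ) ∣ u := by
      intro h
      have h2 : (p : ℤ) ∣ u ^ 2 := by rw [sq]; exact h.mul_left u
      have : (p : ℤ) ∣ 1 := by
        have := dvd_sub h1 h2
        simpa using this
      exact hpZ.not_dvd_one this
    have hp2u : ¬ (p : ℤ) ∣ 2 * u := by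
      intro h
      rcases hpZ.dvd_mul.mp h with h | h
      · have h2 : p ∣ 2 := by exact_mod_cast h
        have := (Nat.prime_dvd_prime_iff_eq hp Nat.prime_two).mp h2
        omega
      · exact hpu h
    have h2u : ((2 * u : ℤ) : ZMod p) ≠ 0 := by
      rw [Ne, ZMod.intCast_zmod_eq_zero_iff_dvd]; exact hp2u
    set w : ZMod p := (-(v : ZMod p)) * ((2 * u : ℤ) : ZMod p)⁻¹ with hw
    set t : ℤ := (w.val : ℤ) with ht
    have htw : ((t : ℤ) : ZMod p) = w := by
      rw [ht]
      simp [ZMod.natCast_val, ZMod.cast_id]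
    have hq : (p : ℤ) ∣ v + 2 * u * t := by
      rw [← ZMod.intCast_zmod_eq_zero_iff_dvd]
      push_cast
      rw [htw, hw]
      push_cast
      push_cast at h2u
      have hinv : (2 * (u : ZMod p)) * (2 * (u : ZMod p))⁻¹ = 1 := mul_inv_cancel₀ h2u
      linear_combination (-(v : ZMod p)) * hinv
    obtain ⟨q, hq⟩ := hq
    refine ⟨u + t * (p : ℤ) ^ (s + 1), q + t ^ 2 * (p : ℤ) ^ s, ?_⟩
    linear_combination hv + (p : ℤ) ^ (s + 1) * hq

lemma auxC (p : ℕ) (hp : p.Prime) (hp1 : p % 4 = 1)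
    (π : GaussianInt) (hπ : Prime π) (hover : π ∣ (p : GaussianInt)) (s : ℕ) :
    ∃ w : ℤ, π ^ s ∣ (⟨0, 1⟩ : GaussianInt) - (w : GaussianInt) := by
  rcases Nat.eq_zero_or_pos s with rfl | hs
  · exact ⟨0, by simp⟩
  obtain ⟨u, hu⟩ := auxA p hp hp1 (s - 1)
  rw [Nat.sub_add_cancel hs] at hu
  -- cast to Gaussian integers
  have hu' : ((p : GaussianInt)) ^ s ∣ ((u : GaussianInt) + ⟨0, 1⟩) * ((u : GaussianInt) - ⟨0, 1⟩) := by
    obtain ⟨v, hv⟩ := hu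
    refine ⟨(v : GaussianInt), ?_⟩
    have : ((u ^ 2 + 1 : ℤ) : GaussianInt) = (((p : ℤ) ^ s * v : ℤ) : GaussianInt) := by
      exact_mod_cast congrArg (fun z : ℤ => (z : GaussianInt)) hv
    push_cast at this
    have hi : (⟨0, 1⟩ : GaussianInt) * ⟨0, 1⟩ = -1 := by
      ext <;> simp [Zsqrtd.re_mul, Zsqrtd.im_mul]
    calc ((u : GaussianInt) + ⟨0, 1⟩) * ((u : GaussianInt) - ⟨0, 1⟩)
        = (u : GaussianInt) ^ 2 + 1 - ((⟨0, 1⟩ : GaussianInt) * ⟨0, 1⟩ + 1) := by ring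
      _ = (p : GaussianInt) ^ s * v := by rw [hi, this]; ring
  have hπs : π ^ s ∣ ((u : GaussianInt) + ⟨0, 1⟩) * ((u : GaussianInt) - ⟨0, 1⟩) :=
    (pow_dvd_pow_of_dvd hover s).trans hu'
  -- π does not divide 2
  have hπ2 : ¬ π ∣ (2 : GaussianInt) := by
    intro h2
    have hc : Nat.Coprime p 2 := hp.coprime_iff_not_dvd.mpr (by
      intro h; have := (Nat.prime_dvd_prime_iff_eq hp Nat.prime_two).mp h; omega)
    have hcz : IsCoprime (p : ℤ) 2 := by
      rw [Int.isCoprime_iff_gcd_eq_one]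
      simpa [Int.gcd] using hc
    have hcg : IsCoprime (p : GaussianInt) 2 := by
      have := hcz.map (Int.castRingHom GaussianInt)
      push_cast at this
      exact this
    exact hπ.not_unit (hcg.isUnit_of_dvd' hover h2)
  -- π does not divide both u+i and u-i
  have hi : (⟨0, 1⟩ : GaussianInt) * ⟨0, 1⟩ = -1 := by
    ext <;> simp [Zsqrtd.re_mul, Zsqrtd.im_mul]
  have hnotboth : ¬ π ∣ ((u : GaussianInt) + ⟨0, 1⟩) ∨ ¬ π ∣ ((u : GaussianInt) - ⟨0, 1⟩) := by
    by_contra h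
    push_neg at h
    have h2i : π ∣ (2 : GaussianInt) * ⟨0, 1⟩ := by
      have := dvd_sub h.1 h.2
      have he : ((u : GaussianInt) + ⟨0, 1⟩) - ((u : GaussianInt) - ⟨0, 1⟩) = (2 : GaussianInt) * ⟨0, 1⟩ := by ring
      rwa [he] at this
    have : π ∣ (2 : GaussianInt) := by
      have h3 := h2i.mul_right (-(⟨0, 1⟩ : GaussianInt))
      have he : (2 : GaussianInt) * ⟨0, 1⟩ * (-(⟨0, 1⟩ : GaussianInt)) = 2 := by
        have : (2 : GaussianInt) * ⟨0, 1⟩ * (-(⟨0, 1⟩ : GaussianInt)) = -(2 * (⟨0, 1⟩ * ⟨0, 1⟩)) := by ring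
        rw [this, hi]; ring
      rwa [he] at h3
    exact hπ2 this
  rcases hnotboth with h | h
  · -- π^s ∣ u - i, take w = u
    have hcop : IsCoprime (π ^ s) ((u : GaussianInt) + ⟨0, 1⟩) :=
      (hπ.coprime_iff_not_dvd.mpr h).symm.pow_right.symm
    have hdvd : π ^ s ∣ ((u : GaussianInt) - ⟨0, 1⟩) := by
      exact hcop.dvd_of_dvd_mul_left hπs
    refine ⟨u, ?_⟩
    have := hdvd.neg_right
    have he : -((u : GaussianInt) - ⟨0, 1⟩) = (⟨0, 1⟩ : GaussianInt) - (u : GaussianInt) := by ring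
    rwa [he] at this
  · -- π^s ∣ u + i, take w = -u
    have hcop : IsCoprime (π ^ s) ((u : GaussianInt) - ⟨0, 1⟩) :=
      (hπ.coprime_iff_not_dvd.mpr h).symm.pow_right.symm
    have hdvd : π ^ s ∣ ((u : GaussianInt) + ⟨0, 1⟩) :=
      hcop.dvd_of_dvd_mul_right hπs
    refine ⟨-u, ?_⟩
    have he : (⟨0, 1⟩ : GaussianInt) - ((-u : ℤ) : GaussianInt) = (u : GaussianInt) + ⟨0, 1⟩ := by
      push_cast; ring
    rwa [he]

lemma auxE (p : ℕ) (hp : p.Prime) (hp1 : p % 4 = 1)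
    (π : GaussianInt) (hπ : Prime π) (hover : π ∣ (p : GaussianInt)) (s : ℕ)
    (β : GaussianInt) : ∃ n : ℤ, π ^ s ∣ β - (n : GaussianInt) := by
  obtain ⟨w, hw⟩ := auxC p hp hp1 π hπ hover s
  refine ⟨β.re + β.im * w, ?_⟩
  have hβ : β = (β.re : GaussianInt) + (β.im : GaussianInt) * ⟨0, 1⟩ := by
    ext <;> simp [Zsqrtd.re_mul, Zsqrtd.im_mul]
  have he : β - ((β.re + β.im * w : ℤ) : GaussianInt)
      = (β.im : GaussianInt) * ((⟨0, 1⟩ : GaussianInt) - (w : GaussianInt)) := by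
    ext <;> simp [Zsqrtd.re_mul, Zsqrtd.im_mul]
  rw [he]
  exact hw.mul_left _


/-- on a primitive Gaussian line with `Δ ≠ 0`, if a Gaussian prime `π` lying
over a rational prime `p ≡ 1 (mod 4)` satisfies `π^k ∣ α_m` for some `k ≥ 1`, then every
power `π^r` (r ≥ 1) exactly divides some Gaussian integer on the line. -/
theorem gaussian_line_exact_power_one_mod_four
    (a b c d : ℤ) (hcd : Int.gcd c d = 1)
    (hcop : IsCoprime (⟨a, b⟩ : GaussianInt) (⟨c, d⟩ : GaussianInt))
    (hΔ : a * d - b * c ≠ 0)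
    (p : ℕ) (hp : p.Prime) (hp1 : p % 4 = 1)
    (π : GaussianInt) (hπ : Prime π) (hover : π ∣ (p : GaussianInt))
    (k : ℕ) (hk : 1 ≤ k) (m : ℤ)
    (hdvd : π ^ k ∣ ((⟨a, b⟩ : GaussianInt) + (m : GaussianInt) * ⟨c, d⟩)) :
    ∀ r : ℕ, 1 ≤ r → ∃ n : ℤ,
      π ^ r ∣ ((⟨a, b⟩ : GaussianInt) + (n : GaussianInt) * ⟨c, d⟩) ∧
      ¬ π ^ (r + 1) ∣ ((⟨a, b⟩ : GaussianInt) + (n : GaussianInt) * ⟨c, d⟩) := by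
  intro r hr
  set α : GaussianInt := ⟨a, b⟩ with hα
  set δ : GaussianInt := ⟨c, d⟩ with hδ
  -- π does not divide δ
  have hπδ : ¬ π ∣ δ := by
    intro h
    have h1 : π ∣ α + (m : GaussianInt) * δ :=
      (dvd_pow_self π (by omega : k ≠ 0)).trans hdvd
    have h2 : π ∣ α := by
      have := dvd_sub h1 (h.mul_left (m : GaussianInt))
      simpa using this
    exact hπ.not_unit (hcop.isUnit_of_dvd' h2 h)
  have hco : IsCoprime (π ^ (r + 1)) δ :=
    (hπ.coprime_iff_not_dvd.mpr hπδ).pow_left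
  obtain ⟨x, y, hxy⟩ := hco
  obtain ⟨n, hn⟩ := auxE p hp hp1 π hπ hover (r + 1) (y * (π ^ r - α))
  -- key congruence
  have key : π ^ (r + 1) ∣ (α + (n : GaussianInt) * δ) - π ^ r := by
    have h1 : π ^ (r + 1) ∣ (y * (π ^ r - α) - (n : GaussianInt)) * δ := hn.mul_right δ
    have h2 : π ^ (r + 1) ∣ x * π ^ (r + 1) * (π ^ r - α) :=
      (dvd_mul_left _ _).mul_right _
    have he : (α + (n : GaussianInt) * δ) - π ^ r
        = -((y * (π ^ r - α) - (n : GaussianInt)) * δ) - x * π ^ (r + 1) * (π ^ r - α)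
          + ((x * π ^ (r + 1) + y * δ) - 1) * (π ^ r - α) := by ring
    rw [he, hxy]
    have h3 : ((1 : GaussianInt) - 1) * (π ^ r - α) = 0 := by ring
    rw [h3, add_zero]
    exact dvd_sub h1.neg_right h2
  obtain ⟨z, hz⟩ := key
  refine ⟨n, ?_, ?_⟩
  · have : α + (n : GaussianInt) * δ = π ^ r + π ^ (r + 1) * z := by
      linear_combination hz
    rw [this]
    exact dvd_add (dvd_refl _) ((pow_dvd_pow π (Nat.le_succ r)).mul_right z)
  · intro hcon
    have hπr : π ^ (r + 1) ∣ π ^ r := by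
      have : (π : GaussianInt) ^ r = (α + (n : GaussianInt) * δ) - π ^ (r + 1) * z := by
        linear_combination -hz
      rw [this]
      exact dvd_sub hcon (Dvd.dvd.mul_right (dvd_refl _) z)
    have hπr' : π ^ r * π ∣ π ^ r * 1 := by
      rw [mul_one, ← pow_succ]; exact hπr
    have := (mul_dvd_mul_iff_left (pow_ne_zero r hπ.ne_zero)).mp hπr'
    exact hπ.not_unit (isUnit_of_dvd_one this)
end

section
/- Let L be a primitive Gaussian line with Δ ≠ 0, and let π be a Gaussian prime lying over a rational prime p ≡ 1 (mod 4). The following are equivalent: (a) π does not divide δ; (b) π^k divides some Gaussian integer on L for some positive integer k; (c) π^r divides some Gaussian integer on L for every positive integer r. -/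
open Zsqrtd

private lemma gauss_star_dvd {x y : GaussianInt} (h : x ∣ y) : star x ∣ star y := by
  obtain ⟨t, rfl⟩ := h
  exact ⟨star t, by rw [star_mul']⟩

/-- A Gaussian prime over an odd split prime is coprime to its conjugate. -/
private lemma gauss_key (p : ℕ) (hp : p.Prime) (hp1 : p % 4 = 1) (π : GaussianInt)
    (hπ : Prime π) (hover : π ∣ (p : GaussianInt)) : ¬ π ∣ star π := by
  intro h
  haveI : Fact p.Prime := ⟨hp⟩
  obtain ⟨x, y, hxy⟩ := Nat.Prime.sq_add_sq (p := p) (by omega)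
  set q : GaussianInt := ⟨(x : ℤ), (y : ℤ)⟩ with hq
  have hfact : (p : GaussianInt) = q * star q := by
    have hxy' : (x : ℤ) ^ 2 + (y : ℤ) ^ 2 = (p : ℤ) := by exact_mod_cast hxy
    ext
    · simp only [re_natCast, re_mul, re_star, im_star, hq]
      ring_nf
      linarith [hxy']
    · simp only [im_natCast, im_mul, re_star, im_star, hq]
      ring
  have hq2 : π ∣ q ∧ π ∣ star q := by
    rcases hπ.dvd_mul.mp (hfact ▸ hover) with h1 | h1
    · exact ⟨h1, h.trans (gauss_star_dvd h1)⟩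
    · exact ⟨h.trans (star_star q ▸ gauss_star_dvd h1), h1⟩
  have hsum : π ∣ ((2 * (x : ℤ) : ℤ) : GaussianInt) := by
    have he : q + star q = ((2 * (x : ℤ) : ℤ) : GaussianInt) := by
      ext <;> simp [hq, re_add, im_add, re_star, im_star, re_intCast, im_intCast] <;> ring
    rw [← he]; exact dvd_add hq2.1 hq2.2
  have hdiff : π ∣ ((2 * (y : ℤ) : ℤ) : GaussianInt) := by
    have he : q - star q = ((2 * (y : ℤ) : ℤ) : GaussianInt) * ⟨0, 1⟩ := by
      ext <;> simp [hq, re_sub, im_sub, re_star, im_star, re_intCast, im_intCast,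
        re_mul, im_mul] <;> ring
    have h1 : π ∣ ((2 * (y : ℤ) : ℤ) : GaussianInt) * ⟨0, 1⟩ := by
      rw [← he]; exact dvd_sub hq2.1 hq2.2
    have h2 : ((2 * (y : ℤ) : ℤ) : GaussianInt) * ⟨0, 1⟩ * ⟨0, -1⟩
        = ((2 * (y : ℤ) : ℤ) : GaussianInt) := by
      ext <;> simp [re_mul, im_mul, re_intCast, im_intCast]
    exact h2 ▸ h1.mul_right ⟨0, -1⟩
  have hcopxy : Nat.Coprime x y := by
    have hsq : Nat.gcd x y * Nat.gcd x y ∣ p := by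
      rw [← hxy]
      exact dvd_add (mul_dvd_mul (Nat.gcd_dvd_left x y) (Nat.gcd_dvd_left x y) |>.trans
        (by rw [← pow_two]))
        (mul_dvd_mul (Nat.gcd_dvd_right x y) (Nat.gcd_dvd_right x y) |>.trans
        (by rw [← pow_two]))
    exact Nat.isUnit_iff.mp (hp.squarefree _ hsq)
  obtain ⟨s, t, hst⟩ :=
    (Int.isCoprime_iff_gcd_eq_one.mpr
      (by rw [Int.gcd_natCast_natCast]; exact hcopxy)).map (Int.castRingHom GaussianInt)
  simp only [Int.coe_castRingHom] at hst
  have h2dvd : π ∣ (2 : GaussianInt) := by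
    have he : (2 : GaussianInt) = s * ((2 * (x : ℤ) : ℤ) : GaussianInt)
        + t * ((2 * (y : ℤ) : ℤ) : GaussianInt) := by
      push_cast
      push_cast at hst
      linear_combination 2 * hst.symm
    rw [he]
    exact dvd_add (hsum.mul_left s) (hdiff.mul_left t)
  have hcp2 : IsCoprime (2 : ℤ) ((p : ℕ) : ℤ) := by
    rw [Int.isCoprime_iff_gcd_eq_one,
      show (2 : ℤ) = ((2 : ℕ) : ℤ) by norm_num, Int.gcd_natCast_natCast]
    exact (Nat.prime_two.coprime_iff_not_dvd).mpr (by omega)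
  obtain ⟨u, v, huv⟩ := hcp2.map (Int.castRingHom GaussianInt)
  simp only [Int.coe_castRingHom] at huv
  refine hπ.not_unit (isUnit_of_dvd_one ?_)
  have hp' : π ∣ ((p : ℤ) : GaussianInt) := by push_cast; exact hover
  have h2' : π ∣ ((2 : ℤ) : GaussianInt) := by push_cast; exact h2dvd
  rw [← huv]
  exact dvd_add (h2'.mul_left u) (hp'.mul_left v)

private lemma gauss_solve (a b c d : ℤ) (π : GaussianInt) (hπ : Prime π)
    (hns : ¬ π ∣ star π) (hδ : ¬ π ∣ (⟨c, d⟩ : GaussianInt)) (r : ℕ) :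
    ∃ n : ℤ, π ^ r ∣ ((⟨a, b⟩ : GaussianInt) + (n : GaussianInt) * ⟨c, d⟩) := by
  set α : GaussianInt := ⟨a, b⟩
  set δ : GaussianInt := ⟨c, d⟩
  obtain ⟨u, v, huv⟩ := ((hπ.coprime_iff_not_dvd).mpr hδ).pow_left (m := r)
  set m : GaussianInt := -(α * v) with hm
  have hmd : π ^ r ∣ α + m * δ := ⟨α * u, by linear_combination (-α) * huv⟩
  obtain ⟨u', v', huv'⟩ := ((hπ.coprime_iff_not_dvd).mpr hns).pow (m := r) (n := r)
  set w : GaussianInt := m * (v' * (star π) ^ r) with hw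
  refine ⟨2 * w.re, ?_⟩
  have hcast : ((2 * w.re : ℤ) : GaussianInt) = w + star w := by
    ext <;> simp [re_add, im_add, re_star, im_star, re_intCast, im_intCast] <;> ring
  have hmw : π ^ r ∣ m - w := ⟨m * u', by linear_combination (-m) * huv'⟩
  have hsw : π ^ r ∣ star w := by
    refine ⟨star m * star v', ?_⟩
    rw [hw, star_mul', star_mul', star_pow, star_star]
    ring
  have he : α + ((2 * w.re : ℤ) : GaussianInt) * δ
      = (α + m * δ) - ((m - w) - star w) * δ := by
    rw [hcast]; ring
  rw [he]
  exact dvd_sub hmd (((dvd_sub hmw hsw)).mul_right δ)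

private lemma gauss_nodvd {α δ π : GaussianInt} (hπ : Prime π) (hcop : IsCoprime α δ)
    (hd : π ∣ δ) (n : ℤ) (h : π ∣ α + (n : GaussianInt) * δ) : False := by
  obtain ⟨u, v, huv⟩ := hcop
  have hα : π ∣ α := by
    have he : α = (α + (n : GaussianInt) * δ) - (n : GaussianInt) * δ := by ring
    rw [he]
    exact dvd_sub h (hd.mul_left _)
  exact hπ.not_unit (isUnit_of_dvd_one
    (huv ▸ dvd_add (hα.mul_left u) (hd.mul_left v)))

/-- for a primitive Gaussian line with `Δ ≠ 0` and a Gaussian prime `π`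
lying over `p ≡ 1 (mod 4)`, the following are equivalent: (a) `π ∤ δ`; (b) some power
`π^k` (k ≥ 1) divides a Gaussian integer on the line; (c) every power `π^r` divides some
Gaussian integer on the line. -/
theorem gaussian_line_powers_one_mod_four_tfae
    (a b c d : ℤ) (hcd : Int.gcd c d = 1)
    (hcop : IsCoprime (⟨a, b⟩ : GaussianInt) (⟨c, d⟩ : GaussianInt))
    (hΔ : a * d - b * c ≠ 0)
    (p : ℕ) (hp : p.Prime) (hp1 : p % 4 = 1)
    (π : GaussianInt) (hπ : Prime π) (hover : π ∣ (p : GaussianInt)) :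
    (¬ π ∣ (⟨c, d⟩ : GaussianInt) ↔
        ∃ k : ℕ, 1 ≤ k ∧ ∃ n : ℤ,
          π ^ k ∣ ((⟨a, b⟩ : GaussianInt) + (n : GaussianInt) * ⟨c, d⟩)) ∧
      (¬ π ∣ (⟨c, d⟩ : GaussianInt) ↔
        ∀ r : ℕ, 1 ≤ r → ∃ n : ℤ,
          π ^ r ∣ ((⟨a, b⟩ : GaussianInt) + (n : GaussianInt) * ⟨c, d⟩)) := by
  have hns := gauss_key p hp hp1 π hπ hover
  constructor
  · constructor
    · intro hδ
      obtain ⟨n, hn⟩ := gauss_solve a b c d π hπ hns hδ 1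
      exact ⟨1, le_refl 1, n, hn⟩
    · rintro ⟨k, hk, n, hkd⟩ hδ
      exact gauss_nodvd hπ hcop hδ n ((dvd_pow_self π (by omega)).trans hkd)
  · constructor
    · intro hδ r _
      exact gauss_solve a b c d π hπ hns hδ r
    · intro hforall hδ
      obtain ⟨n, hn⟩ := hforall 1 le_rfl
      exact gauss_nodvd hπ hcop hδ n (by simpa using hn)
end

section
/- Let L be a primitive Gaussian line with Δ ≠ 0, and suppose 1+i does not divide δ. Let 2^s be the exact power of 2 dividing Δ. Then (1+i)^t divides some Gaussian integer on L if and only if 0 ≤ t ≤ 2s+1; moreover, (1+i)^t exactly divides some Gaussian integer on L if and only if 0 ≤ t ≤ 2s+1 and in addition t is even or t = 2s+1. -/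
lemma uu_mul (p q : ℤ) : (⟨1,1⟩ : GaussianInt) * ⟨p, q⟩ = (⟨p - q, p + q⟩ : GaussianInt) := by
  ext <;> simp [Zsqrtd.re_mul, Zsqrtd.im_mul] <;> ring

lemma uu_dvd_iff (X Y : ℤ) : (⟨1,1⟩ : GaussianInt) ∣ (⟨X, Y⟩ : GaussianInt) ↔ 2 ∣ X + Y := by
  constructor
  · rintro ⟨⟨p, q⟩, h⟩
    rw [uu_mul, Zsqrtd.ext_iff] at h
    simp only at h
    omega
  · rintro ⟨k, hk⟩
    exact ⟨⟨k, Y - k⟩, by rw [uu_mul, Zsqrtd.ext_iff]; constructor <;> simp <;> omega⟩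

lemma intCast_mul_mk (k p q : ℤ) : (k : GaussianInt) * ⟨p,q⟩ = (⟨k*p, k*q⟩ : GaussianInt) := by
  ext <;> simp [Zsqrtd.re_mul, Zsqrtd.im_mul]

lemma prime_uu : Prime (⟨1,1⟩ : GaussianInt) := by
  have hirr : Irreducible (⟨1,1⟩ : GaussianInt) := by
    constructor
    · rw [← Zsqrtd.norm_eq_one_iff]; decide
    · intro x y hxy
      have hnorm : (Zsqrtd.norm x).natAbs * (Zsqrtd.norm y).natAbs = 2 := by
        rw [← Int.natAbs_mul, ← Zsqrtd.norm_mul, ← hxy]; decide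
      have hx : (Zsqrtd.norm x).natAbs ∣ 2 := ⟨_, hnorm.symm⟩
      rcases (Nat.prime_two.eq_one_or_self_of_dvd _ hx) with h | h
      · exact Or.inl (Zsqrtd.norm_eq_one_iff.mp h)
      · right
        apply Zsqrtd.norm_eq_one_iff.mp
        rw [h] at hnorm; omega
  exact UniqueFactorizationMonoid.irreducible_iff_prime.mp hirr

lemma unit_I : IsUnit (⟨0,1⟩ : GaussianInt) :=
  IsUnit.of_mul_eq_one ⟨0,-1⟩ (by ext <;> simp [Zsqrtd.re_mul, Zsqrtd.im_mul])

lemma uu_sq : (⟨1,1⟩ : GaussianInt)^2 = 2 * ⟨0,1⟩ := by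
  rw [pow_two]; ext <;> simp [Zsqrtd.re_mul, Zsqrtd.im_mul]

lemma pow_rel (j : ℕ) :
    (⟨1,1⟩ : GaussianInt)^(2*j) = ((2^j : ℤ) : GaussianInt) * (⟨0,1⟩ : GaussianInt)^j := by
  push_cast
  rw [pow_mul, uu_sq, mul_pow]

lemma even_case (j : ℕ) (X Y : ℤ) :
    (⟨1,1⟩ : GaussianInt)^(2*j) ∣ (⟨X, Y⟩ : GaussianInt) ↔ ((2:ℤ)^j ∣ X ∧ (2:ℤ)^j ∣ Y) := by
  rw [pow_rel, (unit_I.pow j).mul_right_dvd, Zsqrtd.intCast_dvd]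

lemma odd_case (j : ℕ) (X Y : ℤ) :
    (⟨1,1⟩ : GaussianInt)^(2*j+1) ∣ (⟨X, Y⟩ : GaussianInt) ↔
      ((2:ℤ)^j ∣ X ∧ (2:ℤ)^j ∣ Y ∧ (2:ℤ)^(j+1) ∣ X + Y) := by
  constructor
  · intro h
    obtain ⟨hX, hY⟩ := (even_case j X Y).mp ((pow_dvd_pow _ (by omega)).trans h)
    refine ⟨hX, hY, ?_⟩
    obtain ⟨x', hx⟩ := hX
    obtain ⟨y', hy⟩ := hY
    obtain ⟨w, hw⟩ := h
    have hz : ((2^j : ℤ) : GaussianInt) * ⟨x', y'⟩ =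
        ((2^j : ℤ) : GaussianInt) * ((⟨0,1⟩:GaussianInt)^j * ((⟨1,1⟩:GaussianInt) * w)) := by
      rw [intCast_mul_mk, ← hx, ← hy, hw, pow_succ, pow_rel]
      ring
    have h2j : ((2^j : ℤ) : GaussianInt) ≠ 0 := by
      simp only [ne_eq, Int.cast_injective.eq_iff]
      exact_mod_cast pow_ne_zero j (two_ne_zero)
    have hz' : (⟨x', y'⟩ : GaussianInt) = (⟨0,1⟩:GaussianInt)^j * ((⟨1,1⟩:GaussianInt) * w) :=
      mul_left_cancel₀ h2j hz
    have huu : (⟨1,1⟩:GaussianInt) ∣ ⟨x', y'⟩ := ⟨(⟨0,1⟩:GaussianInt)^j * w, by rw [hz']; ring⟩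
    obtain ⟨k, hk⟩ := (uu_dvd_iff x' y').mp huu
    refine ⟨k, by rw [hx, hy, pow_succ]; linear_combination (2:ℤ)^j * hk⟩
  · rintro ⟨⟨x', hx⟩, ⟨y', hy⟩, ⟨k, hk⟩⟩
    have h2 : (2:ℤ) ∣ x' + y' := by
      refine ⟨k, mul_left_cancel₀ (pow_ne_zero j (two_ne_zero : (2:ℤ) ≠ 0)) ?_⟩
      rw [pow_succ] at hk
      linear_combination hk - hx - hy
    have huu : (⟨1,1⟩:GaussianInt) ∣ ⟨x', y'⟩ := (uu_dvd_iff _ _).mpr h2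
    have hz : (⟨X, Y⟩ : GaussianInt) = ((2^j : ℤ) : GaussianInt) * ⟨x', y'⟩ := by
      rw [intCast_mul_mk, ← hx, ← hy]
    rw [hz, pow_succ]
    have hcast : ((2^j : ℤ) : GaussianInt) = (⟨1,1⟩:GaussianInt)^(2*j) * (⟨0,-1⟩:GaussianInt)^j := by
      rw [pow_rel, mul_assoc, ← mul_pow,
        show ((⟨0,1⟩:GaussianInt) * ⟨0,-1⟩) = 1 from by ext <;> simp [Zsqrtd.re_mul, Zsqrtd.im_mul],
        one_pow, mul_one]
    exact mul_dvd_mul ⟨_, hcast⟩ huu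

/-- on a primitive Gaussian line with `Δ ≠ 0` and `(1+i) ∤ δ`, letting `2^s`
be the exact power of 2 dividing `Δ`: `(1+i)^t` divides some Gaussian integer on the line
iff `t ≤ 2s+1`, and `(1+i)^t` exactly divides some Gaussian integer on the line iff
`t ≤ 2s+1` and in addition `t` is even or `t = 2s+1`. -/
theorem gaussian_line_powers_of_one_add_i
    (a b c d : ℤ) (hcd : Int.gcd c d = 1)
    (hcop : IsCoprime (⟨a, b⟩ : GaussianInt) (⟨c, d⟩ : GaussianInt))
    (hΔ : a * d - b * c ≠ 0)
    (hδ : ¬ (⟨1, 1⟩ : GaussianInt) ∣ (⟨c, d⟩ : GaussianInt))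
    (s : ℕ) (hs : (2 : ℤ) ^ s ∣ (a * d - b * c) ∧ ¬ (2 : ℤ) ^ (s + 1) ∣ (a * d - b * c)) :
    ∀ t : ℕ,
      ((∃ n : ℤ, (⟨1, 1⟩ : GaussianInt) ^ t ∣
          ((⟨a, b⟩ : GaussianInt) + (n : GaussianInt) * ⟨c, d⟩)) ↔ t ≤ 2 * s + 1) ∧
      ((∃ n : ℤ, (⟨1, 1⟩ : GaussianInt) ^ t ∣
            ((⟨a, b⟩ : GaussianInt) + (n : GaussianInt) * ⟨c, d⟩) ∧
          ¬ (⟨1, 1⟩ : GaussianInt) ^ (t + 1) ∣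
            ((⟨a, b⟩ : GaussianInt) + (n : GaussianInt) * ⟨c, d⟩)) ↔
        (t ≤ 2 * s + 1 ∧ (Even t ∨ t = 2 * s + 1))) := by
  obtain ⟨hs1, hs2⟩ := hs
  have hcd2 : ¬ (2:ℤ) ∣ c + d := fun h => hδ ((uu_dvd_iff c d).mpr h)
  set P := a*c + b*d with hP
  set N := c^2 + d^2 with hN
  set Q := b*c - a*d with hQdef
  have hQ1 : (2:ℤ)^s ∣ Q := by
    rw [show Q = -(a*d - b*c) by rw [hQdef]; ring]
    exact dvd_neg.mpr hs1
  have hQ2 : ¬ (2:ℤ)^(s+1) ∣ Q := by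
    rw [show Q = -(a*d - b*c) by rw [hQdef]; ring, dvd_neg]
    exact hs2
  have hNodd : ¬ (2:ℤ) ∣ N := by
    intro h
    have h2 : (2:ℤ) ∣ (c+d)^2 := by
      rw [show (c+d)^2 = N + 2*(c*d) by rw [hN]; ring]
      exact dvd_add h ⟨c*d, rfl⟩
    exact hcd2 (Int.prime_two.dvd_of_dvd_pow h2)
  have hw : ¬ (⟨1,1⟩:GaussianInt) ∣ (⟨c, -d⟩ : GaussianInt) := by
    rw [uu_dvd_iff]
    intro h; exact hcd2 (by omega)
  have hline : ∀ n : ℤ, ((⟨a, b⟩ : GaussianInt) + (n : GaussianInt) * ⟨c, d⟩) =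
      (⟨a + n*c, b + n*d⟩ : GaussianInt) := by
    intro n
    ext <;> simp [Zsqrtd.re_mul, Zsqrtd.im_mul]
  have hmulconj : ∀ n : ℤ, (⟨a + n*c, b + n*d⟩ : GaussianInt) * ⟨c, -d⟩ =
      (⟨P + n*N, Q⟩ : GaussianInt) := by
    intro n
    ext <;> simp [Zsqrtd.re_mul, Zsqrtd.im_mul, hP, hN, hQdef] <;> ring
  have hkey : ∀ (t : ℕ) (n : ℤ), ((⟨1,1⟩:GaussianInt)^t ∣ (⟨a + n*c, b + n*d⟩ : GaussianInt) ↔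
      (⟨1,1⟩:GaussianInt)^t ∣ (⟨P + n*N, Q⟩ : GaussianInt)) := by
    intro t n
    constructor
    · intro h
      rw [← hmulconj n]
      exact h.mul_right _
    · intro h
      rw [← hmulconj n] at h
      exact prime_uu.pow_dvd_of_dvd_mul_right t hw h
  have hsolve : ∀ (k : ℕ) (m : ℤ), ∃ n r : ℤ, P + n*N - m = 2^k * r := by
    intro k m
    have hcop2 : IsCoprime ((2:ℤ)^k) N :=
      IsCoprime.pow_left ((Int.prime_two.coprime_iff_not_dvd).mpr hNodd)
    obtain ⟨x, y, hxy⟩ := hcop2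
    refine ⟨(m - P)*y, (P - m)*x, ?_⟩
    linear_combination (m - P) * hxy
  intro t
  rcases Nat.even_or_odd t with ht | ht
  · -- t even
    obtain ⟨j, rfl⟩ : ∃ j, t = 2 * j := by obtain ⟨k, hk⟩ := ht; exact ⟨k, by omega⟩
    have hpart1 : (∃ n : ℤ, (⟨1, 1⟩ : GaussianInt) ^ (2*j) ∣
        ((⟨a, b⟩ : GaussianInt) + (n : GaussianInt) * ⟨c, d⟩)) ↔ 2*j ≤ 2 * s + 1 := by
      constructor
      · rintro ⟨n, hn⟩
        rw [hline, hkey] at hn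
        by_contra hgt
        have h1 : (⟨1,1⟩:GaussianInt)^(2*(s+1)) ∣ (⟨P + n*N, Q⟩ : GaussianInt) :=
          (pow_dvd_pow _ (by omega)).trans hn
        exact hQ2 ((even_case (s+1) _ _).mp h1).2
      · intro hle
        have hjs : j ≤ s := by omega
        obtain ⟨n, r, hr⟩ := hsolve j 0
        refine ⟨n, ?_⟩
        rw [hline, hkey]
        exact (even_case j _ _).mpr ⟨⟨r, by linarith⟩, (pow_dvd_pow 2 hjs).trans hQ1⟩
    refine ⟨hpart1, ?_⟩
    constructor
    · rintro ⟨n, hn, -⟩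
      exact ⟨hpart1.mp ⟨n, hn⟩, Or.inl ⟨j, by ring⟩⟩
    · rintro ⟨hle, -⟩
      have hjs : j ≤ s := by omega
      by_cases hq : (2:ℤ)^(j+1) ∣ Q
      · obtain ⟨n, r, hr⟩ := hsolve (j+1) (2^j)
        refine ⟨n, ?_, ?_⟩
        · rw [hline, hkey]
          refine (even_case j _ _).mpr ⟨⟨1 + 2*r, ?_⟩, (pow_dvd_pow 2 hjs).trans hQ1⟩
          rw [pow_succ] at hr; linarith
        · rw [hline, hkey, odd_case]
          rintro ⟨-, -, ⟨e, he⟩⟩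
          obtain ⟨q, hqq⟩ := hq
          have hcan : (1:ℤ) + 2*r + 2*q = 2*e := by
            apply mul_left_cancel₀ (pow_ne_zero j (two_ne_zero : (2:ℤ) ≠ 0))
            linear_combination he - hr - hqq
          omega
      · obtain ⟨n, r, hr⟩ := hsolve (j+1) 0
        refine ⟨n, ?_, ?_⟩
        · rw [hline, hkey]
          refine (even_case j _ _).mpr ⟨⟨2*r, ?_⟩, (pow_dvd_pow 2 hjs).trans hQ1⟩
          rw [pow_succ] at hr; linarith
        · rw [hline, hkey, odd_case]
          rintro ⟨-, -, hsum⟩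
          apply hq
          have hdd : (2:ℤ)^(j+1) ∣ P + n*N := ⟨r, by linarith⟩
          simpa using dvd_sub hsum hdd
  · -- t odd
    obtain ⟨j, rfl⟩ : ∃ j, t = 2 * j + 1 := by obtain ⟨k, hk⟩ := ht; exact ⟨k, by omega⟩
    have hpart1 : (∃ n : ℤ, (⟨1, 1⟩ : GaussianInt) ^ (2*j+1) ∣
        ((⟨a, b⟩ : GaussianInt) + (n : GaussianInt) * ⟨c, d⟩)) ↔ 2*j+1 ≤ 2 * s + 1 := by
      constructor
      · rintro ⟨n, hn⟩
        rw [hline, hkey] at hn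
        by_contra hgt
        have h1 : (⟨1,1⟩:GaussianInt)^(2*(s+1)) ∣ (⟨P + n*N, Q⟩ : GaussianInt) :=
          (pow_dvd_pow _ (by omega)).trans hn
        exact hQ2 ((even_case (s+1) _ _).mp h1).2
      · intro hle
        have hjs : j ≤ s := by omega
        obtain ⟨n, r, hr⟩ := hsolve (j+1) (-Q)
        refine ⟨n, ?_⟩
        rw [hline, hkey, odd_case]
        refine ⟨?_, (pow_dvd_pow 2 hjs).trans hQ1, ⟨r, by linarith⟩⟩
        have hx : P + n*N = 2^(j+1)*r - Q := by linarith
        rw [hx]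
        exact dvd_sub (dvd_mul_of_dvd_left (pow_dvd_pow 2 (Nat.le_succ j)) r)
          ((pow_dvd_pow 2 hjs).trans hQ1)
    refine ⟨hpart1, ?_⟩
    constructor
    · rintro ⟨n, hn, hn'⟩
      have hle := hpart1.mp ⟨n, hn⟩
      refine ⟨hle, Or.inr ?_⟩
      by_contra hne
      have hjs : j + 1 ≤ s := by omega
      apply hn'
      rw [hline, hkey] at hn ⊢
      rw [show 2*j+1+1 = 2*(j+1) by ring]
      rw [odd_case] at hn
      obtain ⟨hX, hYQ, hsum⟩ := hn
      have hQj : (2:ℤ)^(j+1) ∣ Q := (pow_dvd_pow 2 hjs).trans hQ1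
      refine (even_case (j+1) _ _).mpr ⟨?_, hQj⟩
      simpa using dvd_sub hsum hQj
    · rintro ⟨hle, heven | heq⟩
      · exfalso; obtain ⟨r, hr⟩ := heven; omega
      · have hjs : j = s := by omega
        subst hjs
        obtain ⟨n, r, hr⟩ := hsolve (j+1) (-Q)
        refine ⟨n, ?_, ?_⟩
        · rw [hline, hkey, odd_case]
          refine ⟨?_, (pow_dvd_pow 2 (le_refl j)).trans hQ1, ⟨r, by linarith⟩⟩
          have hx : P + n*N = 2^(j+1)*r - Q := by linarith
          rw [hx]
          exact dvd_sub (dvd_mul_of_dvd_left (pow_dvd_pow 2 (Nat.le_succ j)) r)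
            ((pow_dvd_pow 2 (le_refl j)).trans hQ1)
        · rw [hline, hkey]
          rw [show 2*j+1+1 = 2*(j+1) by ring, even_case]
          rintro ⟨-, hQdvd⟩
          exact hQ2 hQdvd
end

section
/- Let L be a primitive Gaussian line with Δ ≠ 0, and let p be a rational prime with p ≡ 3 (mod 4). Then for any k ≥ 0, p^k exactly divides some Gaussian integer α_n on L (i.e., p^k ∣ α_n and p^{k+1} ∤ α_n in ℤ[i]) if and only if p^k divides Δ. -/
lemma aux_exact (p : ℤ) (hp : Prime p) (k : ℕ) (a b c d : ℤ)
    (hpc : ¬ p ∣ c) (hdvd : p ^ k ∣ a * d - b * c) :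
    ∃ n : ℤ, (p ^ k ∣ a + n * c ∧ p ^ k ∣ b + n * d) ∧
      ¬ (p ^ (k + 1) ∣ a + n * c ∧ p ^ (k + 1) ∣ b + n * d) := by
  have h1 : IsCoprime (p ^ k) c := ((hp.coprime_iff_not_dvd).mpr hpc).pow_left
  have h1c := h1
  obtain ⟨u, v, huv⟩ := h1c
  set n : ℤ := -(a * v) with hn
  have hA : p ^ k ∣ a + n * c := ⟨a * u, by linear_combination -a * huv⟩
  have hB : p ^ k ∣ b + n * d := by
    have h2 : p ^ k ∣ (b + n * d) * c := by
      have : (b + n * d) * c = (a + n * c) * d - (a * d - b * c) := by ring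
      rw [this]
      exact dvd_sub (hA.mul_right d) hdvd
    exact h1.dvd_of_dvd_mul_right h2
  by_cases hcase : p ^ (k + 1) ∣ a + n * c ∧ p ^ (k + 1) ∣ b + n * d
  · refine ⟨n + p ^ k, ⟨?_, ?_⟩, ?_⟩
    · have : a + (n + p ^ k) * c = (a + n * c) + p ^ k * c := by ring
      rw [this]; exact dvd_add hA (Dvd.intro c rfl)
    · have : b + (n + p ^ k) * d = (b + n * d) + p ^ k * d := by ring
      rw [this]; exact dvd_add hB (Dvd.intro d rfl)
    · rintro ⟨hX, -⟩
      have hsub : p ^ (k + 1) ∣ p ^ k * c := by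
        have : p ^ k * c = (a + (n + p ^ k) * c) - (a + n * c) := by ring
        rw [this]; exact dvd_sub hX hcase.1
      rw [pow_succ, mul_dvd_mul_iff_left (pow_ne_zero k hp.ne_zero)] at hsub
      exact hpc hsub
  · exact ⟨n, ⟨hA, hB⟩, hcase⟩

/-- on a primitive Gaussian line with `Δ ≠ 0`, for a rational prime
`p ≡ 3 (mod 4)` and `k ≥ 0`, `p^k` exactly divides some Gaussian integer on the line iff
`p^k ∣ Δ`. -/
theorem gaussian_line_exact_power_three_mod_four
    (a b c d : ℤ) (hcd : Int.gcd c d = 1)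
    (hcop : IsCoprime (⟨a, b⟩ : GaussianInt) (⟨c, d⟩ : GaussianInt))
    (hΔ : a * d - b * c ≠ 0)
    (p : ℕ) (hp : p.Prime) (hp3 : p % 4 = 3) (k : ℕ) :
    (∃ n : ℤ, (p : GaussianInt) ^ k ∣
          ((⟨a, b⟩ : GaussianInt) + (n : GaussianInt) * ⟨c, d⟩) ∧
        ¬ (p : GaussianInt) ^ (k + 1) ∣
          ((⟨a, b⟩ : GaussianInt) + (n : GaussianInt) * ⟨c, d⟩)) ↔
      (p : ℤ) ^ k ∣ (a * d - b * c) := by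
  have hpZ : Prime (p : ℤ) := Nat.prime_iff_prime_int.mp hp
  have key : ∀ (m : ℕ) (n : ℤ), (p : GaussianInt) ^ m ∣
      ((⟨a, b⟩ : GaussianInt) + (n : GaussianInt) * ⟨c, d⟩) ↔
      ((p : ℤ) ^ m ∣ a + n * c ∧ (p : ℤ) ^ m ∣ b + n * d) := by
    intro m n
    have hcast : (p : GaussianInt) ^ m = (((p : ℤ) ^ m : ℤ) : GaussianInt) := by
      push_cast; ring
    rw [hcast, Zsqrtd.intCast_dvd]
    constructor
    · rintro ⟨h1, h2⟩
      constructor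
      · simpa using h1
      · simpa using h2
    · rintro ⟨h1, h2⟩
      constructor
      · simpa using h1
      · simpa using h2
  constructor
  · rintro ⟨n, h1, -⟩
    rw [key] at h1
    have : a * d - b * c = (a + n * c) * d - (b + n * d) * c := by ring
    rw [this]
    exact dvd_sub (h1.1.mul_right d) (h1.2.mul_right c)
  · intro hΔk
    have hor : ¬ (p : ℤ) ∣ c ∨ ¬ (p : ℤ) ∣ d := by
      by_contra h
      push_neg at h
      have : (p : ℤ) ∣ (Int.gcd c d : ℤ) := Int.dvd_coe_gcd h.1 h.2
      rw [hcd] at this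
      exact hpZ.not_dvd_one (by exact_mod_cast this)
    rcases hor with hpc | hpd
    · obtain ⟨n, ⟨hA, hB⟩, hno⟩ := aux_exact (p : ℤ) hpZ k a b c d hpc hΔk
      exact ⟨n, (key k n).mpr ⟨hA, hB⟩, fun h => hno ((key (k+1) n).mp h)⟩
    · obtain ⟨n, ⟨hA, hB⟩, hno⟩ := aux_exact (p : ℤ) hpZ k b a d c hpd
        (by have : b * c - a * d = -(a * d - b * c) := by ring
            rw [this]; exact hΔk.neg_right)
      exact ⟨n, (key k n).mpr ⟨hB, hA⟩, fun h => hno (And.symm ((key (k+1) n).mp h))⟩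
end

section
/- Let L be a primitive Gaussian line with α_n = α₀ + nδ and suppose 1+2i divides α₀ and 1-2i divides α₁. Then no Gaussian integer on L is divisible by 5. -/
open Zsqrtd GaussianInt

lemma gauss_prime_of_norm_prime (z : GaussianInt) (hz : Nat.Prime z.norm.natAbs) :
    Prime z := by
  rw [← UniqueFactorizationMonoid.irreducible_iff_prime]
  constructor
  · intro hu
    rw [← Zsqrtd.norm_eq_one_iff] at hu
    rw [hu] at hz
    exact hz.one_lt.ne' rfl
  · intro a b hab
    have hn : a.norm.natAbs * b.norm.natAbs = z.norm.natAbs := by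
      rw [← Int.natAbs_mul, ← Zsqrtd.norm_mul, ← hab]
    rcases hz.eq_one_or_self_of_dvd a.norm.natAbs ⟨_, hn.symm⟩ with h | h
    · exact Or.inl (Zsqrtd.norm_eq_one_iff.mp h)
    · refine Or.inr (Zsqrtd.norm_eq_one_iff.mp ?_)
      have : z.norm.natAbs * b.norm.natAbs = z.norm.natAbs * 1 := by
        rw [mul_one, ← h, hn]; exact h.symm
      exact Nat.eq_of_mul_eq_mul_left hz.pos this

lemma gauss_dvd_int_five {z : GaussianInt} (hz : z.norm = 5) {n : ℤ}
    (h : z ∣ (n : GaussianInt)) : (5 : ℤ) ∣ n := by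
  obtain ⟨c, hc⟩ := h
  have : n * n = 5 * c.norm := by
    have := congrArg Zsqrtd.norm hc
    rwa [Zsqrtd.norm_mul, Zsqrtd.norm_intCast, hz] at this
  have h5 : (5 : ℤ) ∣ n * n := ⟨c.norm, this⟩
  have hp : Prime (5 : ℤ) := by norm_num
  rcases hp.2.2 _ _ h5 with h | h <;> exact h

/-- if `1+2i ∣ α₀` and `1-2i ∣ α₁` on a primitive Gaussian line, then no
Gaussian integer on the line is divisible by 5. -/
theorem gaussian_line_not_div_five
    (α₀ δ : GaussianInt) (hcd : Int.gcd δ.re δ.im = 1) (hcop : IsCoprime α₀ δ)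
    (h1 : (⟨1, 2⟩ : GaussianInt) ∣ α₀)
    (h2 : (⟨1, -2⟩ : GaussianInt) ∣ (α₀ + δ)) :
    ∀ n : ℤ, ¬ (5 : GaussianInt) ∣ (α₀ + (n : GaussianInt) * δ) := by
  intro n hn
  have h5 : (5 : GaussianInt) = ⟨1, 2⟩ * ⟨1, -2⟩ := by
    ext <;> simp [Zsqrtd.re_mul, Zsqrtd.im_mul] <;> norm_num
  have p1 : Prime (⟨1, 2⟩ : GaussianInt) :=
    gauss_prime_of_norm_prime _ (by norm_num [Zsqrtd.norm])
  have p2 : Prime (⟨1, -2⟩ : GaussianInt) :=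
    gauss_prime_of_norm_prime _ (by norm_num [Zsqrtd.norm])
  have da : (⟨1, 2⟩ : GaussianInt) ∣ α₀ + (n : GaussianInt) * δ :=
    dvd_trans ⟨_, h5⟩ hn
  have db : (⟨1, -2⟩ : GaussianInt) ∣ α₀ + (n : GaussianInt) * δ :=
    dvd_trans ⟨_, by rw [h5, mul_comm]⟩ hn
  have hnd : (⟨1, 2⟩ : GaussianInt) ∣ (n : GaussianInt) * δ := by
    have := da.sub h1
    simpa using this
  have hδ1 : ¬ (⟨1, 2⟩ : GaussianInt) ∣ δ := fun h =>
    p1.not_unit (hcop.isUnit_of_dvd' h1 h)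
  have hn1 : (⟨1, 2⟩ : GaussianInt) ∣ (n : GaussianInt) :=
    (p1.2.2 _ _ hnd).resolve_right hδ1
  have hmd : (⟨1, -2⟩ : GaussianInt) ∣ ((n - 1 : ℤ) : GaussianInt) * δ := by
    have := db.sub h2
    have e : α₀ + (n : GaussianInt) * δ - (α₀ + δ) = ((n - 1 : ℤ) : GaussianInt) * δ := by
      push_cast
      ring
    rwa [e] at this
  have hδ2 : ¬ (⟨1, -2⟩ : GaussianInt) ∣ δ := fun h =>
    p2.not_unit (hcop.isUnit_of_dvd' (by simpa using h2.sub h) h)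
  have hm1 : (⟨1, -2⟩ : GaussianInt) ∣ ((n - 1 : ℤ) : GaussianInt) :=
    (p2.2.2 _ _ hmd).resolve_right hδ2
  have d1 : (5 : ℤ) ∣ n := gauss_dvd_int_five (by norm_num [Zsqrtd.norm]) hn1
  have d2 : (5 : ℤ) ∣ n - 1 := gauss_dvd_int_five (by norm_num [Zsqrtd.norm]) hm1
  omega
end
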